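/- Let K be a finite-dimensional inner product space with inner product ⟨·,·⟩, S a strictly positive (self-adjoint, positive definite) operator on K, and K₀ ⊆ K a subspace with basis e₁,…,e_d. Define d×d matrices K¹ᵢⱼ = ⟨eᵢ, Seⱼ⟩, K²ᵢⱼ = ⟨eᵢ, eⱼ⟩, K³ᵢⱼ = ⟨eᵢ, S⁻¹eⱼ⟩. Then S(K₀) = K₀ if and only if (K³)⁻¹ = (K²)⁻¹ K¹ (K²)⁻¹. -/

import Mathlib

open Matrix
noncomputable section

private lemma gram_isUnit_det {K : Type*} [NormedAddCommGroup K]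
    [InnerProductSpace ℂ K] (T : K →ₗ[ℂ] K)
    (hT : ∀ v : K, v ≠ 0 → (inner ℂ v (T v) : ℂ).re ≠ 0)
    {d : ℕ} (e : Fin d → K) (hind : LinearIndependent ℂ e) :
    IsUnit (Matrix.of fun i j => (inner ℂ (e i) (T (e j)) : ℂ)).det := by
  rw [isUnit_iff_ne_zero]
  intro hdet
  obtain ⟨x, hx0, hx⟩ := Matrix.exists_mulVec_eq_zero_iff.mpr hdet
  set v : K := ∑ j, x j • e j with hv
  have hv0 : v ≠ 0 := by
    intro h
    exact hx0 (funext fun i => Fintype.linearIndependent_iff.mp hind x h i)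
  have hzero : ∀ i, (inner ℂ (e i) (T v) : ℂ) = 0 := by
    intro i
    have := congrFun hx i
    simpa [Matrix.mulVec, dotProduct, hv, map_sum, _root_.map_smul,
      inner_sum, inner_smul_right, mul_comm] using this
  have : (inner ℂ v (T v) : ℂ) = 0 := by
    rw [hv, sum_inner]
    simp only [inner_smul_left]
    rw [show (∑ j, x j • e j) = v from rfl]
    simp [hzero]
  exact hT v hv0 (by rw [this]; simp)

/-- Gram-matrix criterion for invariance of a subspace under a strictly positive operator `S`:
with `K¹ᵢⱼ = ⟨eᵢ, Seⱼ⟩`, `K²ᵢⱼ = ⟨eᵢ, eⱼ⟩`, `K³ᵢⱼ = ⟨eᵢ, S⁻¹eⱼ⟩` for a basis `e` of `K₀`,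
`S(K₀) = K₀` iff `(K³)⁻¹ = (K²)⁻¹ K¹ (K²)⁻¹`. -/
theorem posOperator_invariant_iff_gram {K : Type*} [NormedAddCommGroup K]
    [InnerProductSpace ℂ K] [FiniteDimensional ℂ K]
    (S Sinv : K →ₗ[ℂ] K)
    (hsa : ∀ v w : K, (inner ℂ (S v) w : ℂ) = inner ℂ v (S w))
    (hpos : ∀ v : K, v ≠ 0 → 0 < (inner ℂ v (S v) : ℂ).re)
    (hinv₁ : ∀ v, Sinv (S v) = v) (hinv₂ : ∀ v, S (Sinv v) = v)
    {d : ℕ} (e : Fin d → K) (hind : LinearIndependent ℂ e) :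
    let K₀ := Submodule.span ℂ (Set.range e)
    let K1 : Matrix (Fin d) (Fin d) ℂ := Matrix.of fun i j => inner ℂ (e i) (S (e j))
    let K2 : Matrix (Fin d) (Fin d) ℂ := Matrix.of fun i j => inner ℂ (e i) (e j)
    let K3 : Matrix (Fin d) (Fin d) ℂ := Matrix.of fun i j => inner ℂ (e i) (Sinv (e j))
    Submodule.map S K₀ = K₀ ↔ K3⁻¹ = K2⁻¹ * K1 * K2⁻¹ := by
  intro K₀ K1 K2 K3
  have hinjS : Function.Injective S := Function.LeftInverse.injective hinv₁
  -- K2 is invertible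
  have hK2 : IsUnit K2.det := by
    have := gram_isUnit_det (LinearMap.id (R := ℂ) (M := K))
      (fun v hv => by
        simp only [LinearMap.id_apply]
        have h2 : ((inner ℂ v v : ℂ)).re = ‖v‖ ^ 2 := by
          simpa using inner_self_eq_norm_sq (𝕜 := ℂ) v
        rw [h2]
        exact pow_ne_zero 2 (norm_ne_zero_iff.mpr hv))
      e hind
    simpa [K2] using this
  -- K3 is invertible
  have hK3 : IsUnit K3.det := by
    refine gram_isUnit_det Sinv (fun v hv => ?_) e hind
    have hu : Sinv v ≠ 0 := fun h => hv (by rw [← hinv₂ v, h, map_zero])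
    have : (inner ℂ v (Sinv v) : ℂ) = inner ℂ (Sinv v) (S (Sinv v)) := by
      calc (inner ℂ v (Sinv v) : ℂ) = inner ℂ (S (Sinv v)) (Sinv v) := by rw [hinv₂]
        _ = inner ℂ (Sinv v) (S (Sinv v)) := hsa _ _
    rw [this]
    exact (hpos _ hu).ne'
  -- membership of all S (e j) in K₀ implies invariance
  have step2 : (∀ j, S (e j) ∈ K₀) → Submodule.map S K₀ = K₀ := by
    intro hmem
    have hle : Submodule.map S K₀ ≤ K₀ := by
      rw [Submodule.map_span, ← Set.range_comp]
      exact Submodule.span_le.mpr (Set.range_subset_iff.mpr hmem)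
    refine Submodule.eq_of_le_of_finrank_eq hle ?_
    exact ((Submodule.equivMapOfInjective S hinjS K₀).finrank_eq).symm
  constructor
  · -- forward
    intro h
    have hmemS : ∀ j, S (e j) ∈ K₀ := by
      intro j
      rw [← h]
      exact Submodule.mem_map_of_mem (Submodule.subset_span ⟨j, rfl⟩)
    have hmemSinv : ∀ j, Sinv (e j) ∈ K₀ := by
      intro j
      have hj : e j ∈ Submodule.map S K₀ := by
        rw [h]; exact Submodule.subset_span ⟨j, rfl⟩
      obtain ⟨y, hy, hy'⟩ := hj
      rw [← hy', hinv₁]; exact hy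
    choose A hA using fun j => (Submodule.mem_span_range_iff_exists_fun ℂ).mp (hmemS j)
    choose B hB using fun j => (Submodule.mem_span_range_iff_exists_fun ℂ).mp (hmemSinv j)
    have e1 : K1 = K2 * Matrix.of (fun i j => A j i) := by
      ext i j
      simp only [K1, K2, Matrix.mul_apply, Matrix.of_apply, ← hA j, inner_sum,
        inner_smul_right, mul_comm]
    have e2 : K3 = K2 * Matrix.of (fun i j => B j i) := by
      ext i j
      simp only [K3, K2, Matrix.mul_apply, Matrix.of_apply, ← hB j, inner_sum,
        inner_smul_right, mul_comm]
    have e3 : K2 = K1 * Matrix.of (fun i j => B j i) := by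
      ext i j
      have : e j = S (Sinv (e j)) := (hinv₂ (e j)).symm
      calc (K2 i j : ℂ) = inner ℂ (e i) (S (Sinv (e j))) := by rw [hinv₂]; rfl
        _ = inner ℂ (e i) (S (∑ k, B j k • e k)) := by rw [hB j]
        _ = ∑ k, B j k * inner ℂ (e i) (S (e k)) := by
            rw [map_sum]; simp [inner_sum, inner_smul_right, _root_.map_smul]
        _ = (K1 * Matrix.of (fun i j => B j i)) i j := by
            simp [Matrix.mul_apply, K1, mul_comm]
    -- algebra
    have hB' : Matrix.of (fun i j => B j i) = K2⁻¹ * K3 := by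
      rw [e2, Matrix.nonsing_inv_mul_cancel_left _ _ hK2]
    have e3' : K2 = K1 * (K2⁻¹ * K3) := by rw [← hB', ← e3]
    have : K2 * K3⁻¹ = K1 * K2⁻¹ := by
      calc K2 * K3⁻¹ = K1 * (K2⁻¹ * K3) * K3⁻¹ := by rw [← e3']
        _ = K1 * K2⁻¹ * (K3 * K3⁻¹) := by simp only [Matrix.mul_assoc]
        _ = K1 * K2⁻¹ := by rw [Matrix.mul_nonsing_inv _ hK3, Matrix.mul_one]
    calc K3⁻¹ = K2⁻¹ * (K2 * K3⁻¹) := by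
            rw [Matrix.nonsing_inv_mul_cancel_left _ _ hK2]
      _ = K2⁻¹ * (K1 * K2⁻¹) := by rw [this]
      _ = K2⁻¹ * K1 * K2⁻¹ := by rw [Matrix.mul_assoc]
  · -- backward
    intro h
    set C : Matrix (Fin d) (Fin d) ℂ := K3⁻¹ * K2 with hC
    have hK2C : K2 * C = K1 := by
      rw [hC, h]
      calc K2 * (K2⁻¹ * K1 * K2⁻¹ * K2) = K2 * (K2⁻¹ * (K1 * (K2⁻¹ * K2))) := by
            simp only [Matrix.mul_assoc]
        _ = K1 := by
            rw [Matrix.nonsing_inv_mul _ hK2, Matrix.mul_one,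
              Matrix.mul_nonsing_inv_cancel_left _ _ hK2]
    have hK3C : K3 * C = K2 := by
      rw [hC, Matrix.mul_nonsing_inv_cancel_left _ _ hK3]
    refine step2 (fun j => ?_)
    obtain ⟨w, hw⟩ : ∃ w : K, w = S (e j) - ∑ i, C i j • e i := ⟨_, rfl⟩
    -- inner ℂ (e i) (Sinv w) = 0
    have hz : ∀ i, (inner ℂ (e i) (Sinv w) : ℂ) = 0 := by
      intro i
      have hsw : Sinv w = e j - ∑ k, C k j • Sinv (e k) := by
        rw [hw, map_sub, hinv₁, map_sum]
        simp [_root_.map_smul]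
      rw [hsw, inner_sub_right, inner_sum]
      simp only [inner_smul_right]
      have hs : ∑ k, C k j * (inner ℂ (e i) (Sinv (e k)) : ℂ) = (K3 * C) i j := by
        simp [Matrix.mul_apply, K3, mul_comm]
      rw [hs, hK3C]
      simp [K2]
    have h1 : (inner ℂ (S (e j)) (Sinv w) : ℂ) = inner ℂ (e j) w := by
      rw [hsa, hinv₂]
    have h2 : (inner ℂ (e j) w : ℂ) = 0 := by
      rw [hw, inner_sub_right, inner_sum]
      simp only [inner_smul_right]
      have hs : ∑ k, C k j * (inner ℂ (e j) (e k) : ℂ) = (K2 * C) j j := by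
        simp [Matrix.mul_apply, K2, mul_comm]
      rw [hs, hK2C]
      simp [K1]
    have hzero : (inner ℂ w (Sinv w) : ℂ) = 0 := by
      nth_rewrite 1 [hw]
      rw [inner_sub_left, sum_inner, h1, h2]
      simp [inner_smul_left, hz]
    have hw0 : w = 0 := by
      by_contra hne
      have hu : Sinv w ≠ 0 := fun hh => hne (by rw [← hinv₂ w, hh, map_zero])
      have key : (inner ℂ w (Sinv w) : ℂ) = inner ℂ (Sinv w) (S (Sinv w)) := by
        calc (inner ℂ w (Sinv w) : ℂ) = inner ℂ (S (Sinv w)) (Sinv w) := by rw [hinv₂]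
          _ = inner ℂ (Sinv w) (S (Sinv w)) := hsa _ _
      have hp := hpos _ hu
      rw [← key, hzero] at hp
      simp at hp
    have heq : S (e j) - ∑ i, C i j • e i = 0 := by rw [← hw]; exact hw0
    rw [sub_eq_zero.mp heq]
    exact Submodule.sum_mem _ fun i _ =>
      Submodule.smul_mem _ _ (Submodule.subset_span ⟨i, rfl⟩)
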